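/- If P: U → V is a bounded operator between Banach spaces with nonclosed image and F: U → V is a bounded finite rank operator, then P + F has nonclosed image. -/

import Mathlib

open NormedSpace Metric ZeroAtInfty Filter Topology

noncomputable def dualSup {X : Type*} [NormedAddCommGroup X] [NormedSpace ℝ X]
    (M : Submodule ℝ (StrongDual ℝ X)) (x : X) : ℝ :=
  sSup {r : ℝ | ∃ f ∈ M, ‖f‖ ≤ 1 ∧ r = |f x|}

def IsTotalSub {X : Type*} [NormedAddCommGroup X] [NormedSpace ℝ X]
    (M : Submodule ℝ (StrongDual ℝ X)) : Prop :=
  ∀ x : X, x ≠ 0 → ∃ f ∈ M, f x ≠ 0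

def IsNormingOver {X : Type*} [NormedAddCommGroup X] [NormedSpace ℝ X]
    (M : Submodule ℝ (StrongDual ℝ X)) (L : Submodule ℝ X) : Prop :=
  ∃ c > 0, ∀ x ∈ L, c * ‖x‖ ≤ dualSup M x

def IsNorming {X : Type*} [NormedAddCommGroup X] [NormedSpace ℝ X]
    (M : Submodule ℝ (StrongDual ℝ X)) : Prop :=
  ∃ c > 0, ∀ x : X, c * ‖x‖ ≤ dualSup M x

def NowhereNorming {X : Type*} [NormedAddCommGroup X] [NormedSpace ℝ X]
    (M : Submodule ℝ (StrongDual ℝ X)) : Prop :=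
  ∀ L : Submodule ℝ X, IsClosed (L : Set X) → ¬FiniteDimensional ℝ L →
    ∀ c > 0, ∃ x ∈ L, dualSup M x < c * ‖x‖

def StrictlySingular {X Y : Type*} [NormedAddCommGroup X] [NormedSpace ℝ X]
    [NormedAddCommGroup Y] [NormedSpace ℝ Y] (T : X →L[ℝ] Y) : Prop :=
  ∀ L : Submodule ℝ X, IsClosed (L : Set X) → ¬FiniteDimensional ℝ L →
    ¬∃ c > 0, ∀ x ∈ L, c * ‖x‖ ≤ ‖T x‖

def Nonquasireflexive (X : Type*) [NormedAddCommGroup X] [NormedSpace ℝ X] : Prop :=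
  ¬FiniteDimensional ℝ
    (StrongDual ℝ (StrongDual ℝ X) ⧸ LinearMap.range (inclusionInDoubleDual ℝ X : X →ₗ[ℝ] StrongDual ℝ (StrongDual ℝ X)))

theorem aux_isClosed_sup {V : Type*} [NormedAddCommGroup V] [NormedSpace ℝ V]
    {R E : Submodule ℝ V} (hR : IsClosed (R : Set V)) (hE : FiniteDimensional ℝ E) :
    IsClosed ((E ⊔ R : Submodule ℝ V) : Set V) := by
  haveI := hR
  haveI := hE
  haveI : FiniteDimensional ℝ (E.map R.mkQ) := Module.Finite.map E R.mkQ
  have h2 : IsClosed ((E.map R.mkQ : Submodule ℝ (V ⧸ R)) : Set (V ⧸ R)) :=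
    Submodule.closed_of_finiteDimensional _
  have h3 : IsClosed (R.mkQ ⁻¹' (E.map R.mkQ : Set (V ⧸ R))) :=
    h2.preimage R.isOpenQuotientMap_mkQ.continuous
  have h4 : ((E ⊔ R : Submodule ℝ V) : Set V) = R.mkQ ⁻¹' (E.map R.mkQ : Set (V ⧸ R)) := by
    have : Submodule.comap R.mkQ (E.map R.mkQ) = E ⊔ R := by
      rw [Submodule.comap_map_eq, Submodule.ker_mkQ]
    rw [← this]
    rfl
  rw [h4]; exact h3

theorem stmt10 {U V : Type*} [NormedAddCommGroup U] [NormedSpace ℝ U] [CompleteSpace U]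
    [NormedAddCommGroup V] [NormedSpace ℝ V] [CompleteSpace V]
    (P : U →L[ℝ] V) (h : ¬IsClosed (Set.range P))
    (F : U →L[ℝ] V) (hF : FiniteDimensional ℝ (LinearMap.range (F : U →ₗ[ℝ] V))) :
    ¬IsClosed (Set.range (P + F)) := by
  intro hA
  apply h
  set E : Submodule ℝ V := LinearMap.range (F : U →ₗ[ℝ] V) with hEdef
  set R : Submodule ℝ V := LinearMap.range ((P + F : U →L[ℝ] V) : U →ₗ[ℝ] V) with hRdef
  have hR : IsClosed (R : Set V) := by rwa [hRdef, LinearMap.coe_range, ContinuousLinearMap.coe_coe]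
  set W : Submodule ℝ V := E ⊔ R with hWdef
  have hW : IsClosed (W : Set V) := aux_isClosed_sup hR hF
  haveI : CompleteSpace W := hW.completeSpace_coe
  haveI : FiniteDimensional ℝ E := hF
  haveI : CompleteSpace E := FiniteDimensional.complete ℝ E
  -- every P u lies in W
  have hPW : ∀ u : U, P u ∈ W := by
    intro u
    have : P u = -(F u) + (P + F) u := by simp
    rw [this]
    exact Submodule.add_mem _
      (Submodule.mem_sup_left (neg_mem (LinearMap.mem_range_self (F : U →ₗ[ℝ] V) u)))
      (Submodule.mem_sup_right (LinearMap.mem_range_self ((P + F : U →L[ℝ] V) : U →ₗ[ℝ] V) u))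
  have hEW : ∀ e : V, e ∈ E → e ∈ W := fun e he => Submodule.mem_sup_left he
  let f : (U × E) →L[ℝ] V :=
    P.comp (ContinuousLinearMap.fst ℝ U E) + E.subtypeL.comp (ContinuousLinearMap.snd ℝ U E)
  have hf : ∀ x : U × E, f x = P x.1 + (x.2 : V) := fun x => rfl
  have hfW : ∀ x : U × E, f x ∈ W := by
    intro x
    rw [hf]
    exact Submodule.add_mem _ (hPW x.1) (hEW _ x.2.2)
  let C : (U × E) →L[ℝ] W := f.codRestrict W hfW
  have hsurj : Function.Surjective C := by
    rintro ⟨w, hw⟩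
    rcases Submodule.mem_sup.1 hw with ⟨e, he, r, hr, rfl⟩
    rcases hr with ⟨u, rfl⟩
    refine ⟨(u, ⟨F u + e, add_mem (LinearMap.mem_range_self (F : U →ₗ[ℝ] V) u) he⟩), ?_⟩
    apply Subtype.ext
    show f _ = _
    rw [hf]
    simp only [ContinuousLinearMap.coe_coe, ContinuousLinearMap.add_apply]
    abel
  have hq : Topology.IsQuotientMap C := (C.isOpenMap hsurj).isQuotientMap C.continuous hsurj
  set S : Set W := {w : W | (w : V) ∈ Set.range P} with hSdef
  have hpre : C ⁻¹' S = Prod.snd ⁻¹' (Subtype.val ⁻¹' (Set.range P) : Set E) := by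
    ext ⟨u, e⟩
    simp only [Set.mem_preimage, hSdef, Set.mem_setOf_eq]
    show (f (u, e) ∈ Set.range P) ↔ _
    rw [hf]
    constructor
    · rintro ⟨u', hu'⟩
      exact ⟨u' - u, by rw [map_sub, hu']; abel⟩
    · rintro ⟨u', hu'⟩
      exact ⟨u + u', by rw [map_add, hu']⟩
  have hEP : IsClosed (Subtype.val ⁻¹' (Set.range P) : Set E) := by
    have : (Subtype.val ⁻¹' (Set.range P) : Set E) =
        ((Submodule.comap E.subtype (LinearMap.range (P : U →ₗ[ℝ] V)) : Submodule ℝ E) : Set E) := by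
      ext e
      simp [LinearMap.mem_range, Set.mem_range]
    rw [this]
    exact Submodule.closed_of_finiteDimensional _
  have hSclosed : IsClosed S := by
    rw [← hq.isClosed_preimage, hpre]
    exact hEP.preimage continuous_snd
  have himg : Set.range P = Subtype.val '' S := by
    ext v
    constructor
    · rintro ⟨u, rfl⟩
      exact ⟨⟨P u, hPW u⟩, ⟨u, rfl⟩, rfl⟩
    · rintro ⟨⟨v, hv⟩, hvS, rfl⟩
      exact hvS
  rw [himg]
  exact hW.isClosedEmbedding_subtypeVal.isClosedMap _ hSclosed
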